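/- Let d ∈ ℕ, 1 ≤ p < ∞ and α, β > 0. Then inf{ E_{p;α,β}(T) : T a d-simplex in ℝ^d with |T| = 1 } > 0. -/

import Mathlib

open MeasureTheory Metric Set

/-- The asymmetric `L_p`-error of best approximation of `Q(x) = ∑ xⱼ²` by affine
functions `x ↦ ⟪a, x⟫ + c` on the set `T ⊆ ℝ^d`. -/
noncomputable def Epab (d : ℕ) (p α β : ℝ) (T : Set (EuclideanSpace ℝ (Fin d))) : ℝ :=
  ⨅ (a : EuclideanSpace ℝ (Fin d)) (c : ℝ),
    (∫ x in T,
      (α * max ((∑ j, x j ^ 2) - ((inner ℝ a x : ℝ) + c)) 0 +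
        β * max (-((∑ j, x j ^ 2) - ((inner ℝ a x : ℝ) + c))) 0) ^ p) ^ (1 / p)

open Pointwise

lemma vol_diff_annulus (d : ℕ) (T : Set (EuclideanSpace ℝ (Fin d)))
    (hT : Convex ℝ T) (hTm : MeasurableSet T) (hvol : volume T = 1)
    (x₀ : EuclideanSpace ℝ (Fin d)) (r ε : ℝ) (hε : 0 < ε)
    (hball : ∀ z : EuclideanSpace ℝ (Fin d),
      volume (closedBall z (3 * Real.sqrt ε)) ≤ ENNReal.ofReal (1/2)) :
    ((2:ℝ)⁻¹)^d / 4 ≤ (volume (T \ {x | |‖x - x₀‖^2 - r| ≤ ε})).toReal := by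
  classical
  set A : Set (EuclideanSpace ℝ (Fin d)) := {x | |‖x - x₀‖^2 - r| ≤ ε} with hAdef
  have hcont : Continuous fun x : EuclideanSpace ℝ (Fin d) => |‖x - x₀‖^2 - r| :=
    (((continuous_id.sub continuous_const).norm.pow 2).sub continuous_const).abs
  have hA : MeasurableSet A := (IsClosed.preimage hcont isClosed_Iic).measurableSet
  have hc1 : ((2:ℝ)⁻¹)^d ≤ 1 := pow_le_one₀ (by norm_num) (by norm_num)
  have hc0 : (0:ℝ) < ((2:ℝ)⁻¹)^d := by positivity
  set ρ := 3 * Real.sqrt ε with hρdef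
  have hρpos : 0 < ρ := by positivity
  have hρsq : ρ^2 = 9 * ε := by
    rw [hρdef, mul_pow, Real.sq_sqrt hε.le]; ring
  rcases (T ∩ A).eq_empty_or_nonempty with hS | ⟨z, hzT, hzA⟩
  · have hTA : T \ A = T := by
      ext x; simp only [mem_diff]
      exact ⟨fun h => h.1, fun h => ⟨h, fun hA' => (eq_empty_iff_forall_notMem.mp hS x) ⟨h, hA'⟩⟩⟩
    rw [hTA, hvol]
    norm_num; linarith
  set S : Set (EuclideanSpace ℝ (Fin d)) := T ∩ A with hSdef
  have hSm : MeasurableSet S := hTm.inter hA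
  set S' : Set (EuclideanSpace ℝ (Fin d)) := S \ ball z ρ with hS'def
  have hS'm : MeasurableSet S' := hSm.diff measurableSet_ball
  set S'' : Set (EuclideanSpace ℝ (Fin d)) := (2:ℝ)⁻¹ • (z +ᵥ S') with hS''def
  have hS''m : MeasurableSet S'' :=
    (hS'm.const_vadd z).const_smul_of_ne_zero (by norm_num)
  have hvolS'' : volume S'' = ENNReal.ofReal (((2:ℝ)⁻¹)^d) * volume S' := by
    rw [hS''def, Measure.addHaar_smul_of_nonneg volume (by norm_num),
      finrank_euclideanSpace_fin, measure_vadd (μ := volume)]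
  -- S'' ⊆ T \ A
  have hsub : S'' ⊆ T \ A := by
    rintro y hy
    obtain ⟨u, hu, rfl⟩ := hy
    obtain ⟨x, hx, rfl⟩ := hu
    have hxT : x ∈ T := hx.1.1
    have hxA : |‖x - x₀‖^2 - r| ≤ ε := hx.1.2
    have hxz : ρ ≤ dist x z := by
      have := hx.2; rw [mem_ball] at this; linarith [not_lt.mp this]
    refine ⟨?_, ?_⟩
    · have hmem := hT hzT hxT (le_of_lt (by norm_num : (0:ℝ) < 2⁻¹))
        (le_of_lt (by norm_num : (0:ℝ) < 2⁻¹)) (by norm_num)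
      have he : (2:ℝ)⁻¹ • z + (2:ℝ)⁻¹ • x = (2:ℝ)⁻¹ • (z +ᵥ x) := by
        simp [vadd_eq_add, smul_add]
      rwa [he] at hmem
    · -- not in A
      intro hyA
      simp only [hAdef, mem_setOf_eq] at hyA
      have hzA' : |‖z - x₀‖^2 - r| ≤ ε := hzA
      have hyx : (2:ℝ)⁻¹ • (z +ᵥ x) - x₀ = (2:ℝ)⁻¹ • ((z - x₀) + (x - x₀)) := by
        simp only [vadd_eq_add]
        module
      have hnorm : ‖(2:ℝ)⁻¹ • (z +ᵥ x) - x₀‖^2 = 4⁻¹ * ‖(z - x₀) + (x - x₀)‖^2 := by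
        rw [hyx, norm_smul, mul_pow]
        norm_num
      have hpar : ‖(z - x₀) + (x - x₀)‖^2 + ‖(z - x₀) - (x - x₀)‖^2
          = 2*(‖z - x₀‖^2 + ‖x - x₀‖^2) := by
        have := parallelogram_law_with_norm ℝ (z - x₀) (x - x₀); linarith
      have huv : ρ^2 ≤ ‖(z - x₀) - (x - x₀)‖^2 := by
        have hzx : (z - x₀) - (x - x₀) = z - x := by abel
        rw [hzx]
        have hd : ρ ≤ ‖z - x‖ := by rwa [← dist_eq_norm, dist_comm]
        nlinarith [norm_nonneg (z - x)]
      have hu2 : ‖z - x₀‖^2 ≤ r + ε := by have := abs_le.mp hzA'; linarith [this.2]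
      have hv2 : ‖x - x₀‖^2 ≤ r + ε := by have := abs_le.mp hxA; linarith [this.2]
      have hy2 : ‖(2:ℝ)⁻¹ • (z +ᵥ x) - x₀‖^2 ≤ r - (5/4) * ε := by
        rw [hnorm]; nlinarith
      have habs := (abs_le.mp hyA).1
      linarith
  have hdisj : Disjoint S S'' := by
    rw [Set.disjoint_left]
    exact fun x hx hx' => (hsub hx').2 hx.2
  have hunion_le : volume S + volume S'' ≤ 1 := by
    rw [← measure_union hdisj hS''m, ← hvol]
    exact measure_mono (union_subset inter_subset_left (fun x hx => (hsub hx).1))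
  have hcover : volume S ≤ volume S' + volume (ball z ρ) := by
    refine le_trans (measure_mono ?_) (measure_union_le _ _)
    intro x hx
    by_cases h : x ∈ ball z ρ
    · exact Or.inr h
    · exact Or.inl ⟨hx, h⟩
  have hballz : volume (ball z ρ) ≤ ENNReal.ofReal (1/2) :=
    le_trans (measure_mono ball_subset_closedBall) (hball z)
  -- to real numbers
  have hfinS : volume S ≠ ⊤ :=
    (lt_of_le_of_lt (measure_mono inter_subset_left)
      (by rw [hvol]; exact ENNReal.one_lt_top)).ne
  have hfinS' : volume S' ≠ ⊤ :=
    (lt_of_le_of_lt (measure_mono diff_subset) (lt_top_iff_ne_top.mpr hfinS)).ne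
  have hfinS'' : volume S'' ≠ ⊤ := by
    rw [hvolS'']
    exact ENNReal.mul_ne_top ENNReal.ofReal_ne_top hfinS'
  have hfinb : volume (ball z ρ) ≠ ⊤ := (lt_of_le_of_lt hballz ENNReal.ofReal_lt_top).ne
  set a := (volume S).toReal with hadef
  set a' := (volume S').toReal
  set b := (volume (ball z ρ)).toReal
  set t := (volume (T \ A)).toReal with htdef
  have f1 : a + ((2:ℝ)⁻¹)^d * a' ≤ 1 := by
    have h := ENNReal.toReal_mono ENNReal.one_ne_top hunion_le
    rwa [ENNReal.toReal_add hfinS hfinS'', hvolS'', ENNReal.toReal_mul,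
      ENNReal.toReal_ofReal hc0.le, ENNReal.toReal_one] at h
  have f2 : a ≤ a' + b := by
    have h := ENNReal.toReal_mono (ENNReal.add_ne_top.mpr ⟨hfinS', hfinb⟩) hcover
    rwa [ENNReal.toReal_add hfinS' hfinb] at h
  have fb : b ≤ 1/2 := by
    have h := ENNReal.toReal_mono ENNReal.ofReal_ne_top hballz
    rwa [ENNReal.toReal_ofReal (by norm_num)] at h
  have f3 : a + t = 1 := by
    have h := measure_inter_add_diff (μ := volume) T hA
    rw [hvol] at h
    have h2 := congrArg ENNReal.toReal h
    rwa [ENNReal.toReal_add hfinS (by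
      refine (lt_of_le_of_lt (measure_mono diff_subset) ?_).ne
      rw [hvol]; exact ENNReal.one_lt_top), ENNReal.toReal_one] at h2
  have ha' : 0 ≤ a' := ENNReal.toReal_nonneg
  have ht : 0 ≤ t := ENNReal.toReal_nonneg
  have ha : a = 1 - t := by linarith
  have h4 : ((2:ℝ)⁻¹)^d * (a - 1/2) ≤ ((2:ℝ)⁻¹)^d * a' :=
    mul_le_mul_of_nonneg_left (by linarith) hc0.le
  have h5 : ((2:ℝ)⁻¹)^d * t ≤ 1 * t := mul_le_mul_of_nonneg_right hc1 ht
  nlinarith [h4, h5, f1, f3, fb, ht, ha']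


lemma coord_le_norm (d : ℕ) (y : EuclideanSpace ℝ (Fin d)) (i : Fin d) : |y i| ≤ ‖y‖ := by
  rw [EuclideanSpace.norm_eq]
  have h1 : |y i| = Real.sqrt (‖y i‖^2) := by
    rw [Real.sqrt_sq_eq_abs]; simp [Real.norm_eq_abs, abs_abs]
  rw [h1]
  apply Real.sqrt_le_sqrt
  exact Finset.single_le_sum (f := fun j => ‖y j‖^2) (fun j _ => by positivity) (Finset.mem_univ i)

lemma corner_repr (d : ℕ) (x : EuclideanSpace ℝ (Fin d)) :
    ∑ i, x i • EuclideanSpace.single i (1:ℝ) = x := by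
  classical
  have h := (EuclideanSpace.basisFun (Fin d) ℝ).sum_repr x
  simpa [EuclideanSpace.basisFun_apply, EuclideanSpace.basisFun_repr] using h

lemma corner_mem (d : ℕ) (x : EuclideanSpace ℝ (Fin d))
    (hx : ∀ i, 0 ≤ x i) (hs : ∑ i, x i ≤ 1) :
    x ∈ convexHull ℝ (Set.range (Fin.cons 0 (fun i : Fin d => EuclideanSpace.single i 1) :
      Fin (d+1) → EuclideanSpace ℝ (Fin d))) := by
  classical
  set w : Fin (d+1) → EuclideanSpace ℝ (Fin d) :=
    Fin.cons 0 (fun i : Fin d => EuclideanSpace.single i 1) with hw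
  set μ : Fin (d+1) → ℝ := Fin.cons (1 - ∑ i, x i) (fun i => x i) with hμ
  have hμ0 : ∀ i ∈ Finset.univ, 0 ≤ μ i := by
    intro i _
    refine Fin.cases ?_ ?_ i <;> simp [hμ]
    · linarith
    · exact hx
  have hμsum : ∑ i, μ i = 1 := by rw [hμ, Fin.sum_cons]; ring
  have hrepr : ∑ i, μ i • w i = x := by
    rw [Fin.sum_univ_succ]
    simp only [hμ, hw, Fin.cons_zero, Fin.cons_succ, smul_zero, zero_add]
    exact corner_repr d x
  have := Finset.centerMass_mem_convexHull (Finset.univ) hμ0 (by rw [hμsum]; norm_num)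
    (fun i _ => Set.mem_range_self (f := w) i)
  rwa [Finset.centerMass_eq_of_sum_1 _ _ hμsum, hrepr] at this

lemma corner_affineIndependent (d : ℕ) :
    AffineIndependent ℝ (Fin.cons 0 (fun i : Fin d => EuclideanSpace.single i 1) :
      Fin (d+1) → EuclideanSpace ℝ (Fin d)) := by
  classical
  rw [affineIndependent_iff_linearIndependent_vsub ℝ _ 0]
  have hli : LinearIndependent ℝ (fun i : Fin d => EuclideanSpace.single i (1:ℝ)) := by
    have := (EuclideanSpace.basisFun (Fin d) ℝ).toBasis.linearIndependent
    convert this using 1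
    funext i
    simp [EuclideanSpace.basisFun_apply]
    all_goals rfl
  have hinj : Function.Injective
      (fun i : {x : Fin (d+1) // x ≠ 0} => (i : Fin (d+1)).pred (by exact i.2)) := by
    intro i j hij
    apply Subtype.ext
    have := congrArg Fin.succ hij
    rwa [Fin.succ_pred, Fin.succ_pred] at this
  have := hli.comp _ hinj
  convert this using 1
  funext i
  obtain ⟨i, hi⟩ := i
  simp only [Function.comp]
  rw [show (Fin.cons 0 (fun i : Fin d => EuclideanSpace.single i 1) :
      Fin (d+1) → EuclideanSpace ℝ (Fin d)) i = EuclideanSpace.single (i.pred hi) 1 from ?_]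
  · simp [vsub_eq_sub]
  · conv_lhs => rw [← Fin.succ_pred i hi]
    rw [Fin.cons_succ]
  rfl

lemma exists_unit_simplex (d : ℕ) (hd : 0 < d) :
    ∃ w : Fin (d + 1) → EuclideanSpace ℝ (Fin d),
      AffineIndependent ℝ w ∧ volume (convexHull ℝ (Set.range w)) = 1 := by
  classical
  set w₀ : Fin (d+1) → EuclideanSpace ℝ (Fin d) :=
    Fin.cons 0 (fun i : Fin d => EuclideanSpace.single i 1) with hw₀
  set T₀ := convexHull ℝ (Set.range w₀) with hT₀
  have hdR : (1:ℝ) ≤ (d:ℝ) := by exact_mod_cast hd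
  set q : ℝ := (2*(d:ℝ))⁻¹ with hq
  have hq0 : 0 < q := by rw [hq]; positivity
  have hq1 : q ≤ 1/2 := by
    rw [hq]
    rw [inv_le_comm₀ (by positivity) (by norm_num)]
    linarith
  set cpt : EuclideanSpace ℝ (Fin d) := WithLp.toLp 2 (fun _ => q) with hcpt
  have hball : closedBall cpt (q*q) ⊆ T₀ := by
    intro x hx
    rw [mem_closedBall, dist_eq_norm] at hx
    have hcoord : ∀ i, |x i - q| ≤ q*q := by
      intro i
      have h1 := coord_le_norm d (x - cpt) i
      have h2 : (x - cpt) i = x i - q := rfl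
      rw [h2] at h1
      linarith
    have hx0 : ∀ i, 0 ≤ x i := by
      intro i
      have := (abs_le.mp (hcoord i)).1
      nlinarith
    have hxs : ∑ i, x i ≤ 1 := by
      have hle : ∀ i ∈ Finset.univ, x i ≤ q + q*q := by
        intro i _
        have := (abs_le.mp (hcoord i)).2
        linarith
      calc ∑ i, x i ≤ ∑ _i : Fin d, (q + q*q) := Finset.sum_le_sum hle
        _ = (d:ℝ) * (q + q*q) := by rw [Finset.sum_const, Finset.card_univ]; simp; ring
        _ ≤ 1 := by
            have : (d:ℝ) * q = 1/2 := by rw [hq]; field_simp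
            nlinarith
    exact corner_mem d x hx0 hxs
  have hpos : 0 < volume T₀ :=
    lt_of_lt_of_le (measure_ball_pos volume cpt (by positivity))
      (le_trans (measure_mono ball_subset_closedBall) (measure_mono hball))
  have hfin : volume T₀ ≠ ⊤ :=
    (((Set.finite_range w₀).isCompact_convexHull ℝ).measure_lt_top).ne
  set c₀ := (volume T₀).toReal with hc₀
  have hc₀pos : 0 < c₀ := ENNReal.toReal_pos hpos.ne' hfin
  set s : ℝ := c₀ ^ (-(1:ℝ)/d) with hs
  have hspos : 0 < s := Real.rpow_pos_of_pos hc₀pos _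
  refine ⟨fun i => s • w₀ i, ?_, ?_⟩
  · have hmap := (corner_affineIndependent d).map'
      ((DistribMulAction.toLinearMap ℝ (EuclideanSpace ℝ (Fin d)) s).toAffineMap)
      (smul_right_injective _ hspos.ne')
    convert hmap using 1
    all_goals rfl
  · have hrange : Set.range (fun i => s • w₀ i) = s • Set.range w₀ := by
      rw [← Set.smul_set_range]
    rw [hrange, convexHull_smul, ← hT₀,
      Measure.addHaar_smul_of_nonneg volume hspos.le, finrank_euclideanSpace_fin]
    have hsd : s ^ d = c₀⁻¹ := by
      rw [hs, ← Real.rpow_natCast (c₀ ^ (-(1:ℝ)/d)) d, ← Real.rpow_mul hc₀pos.le]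
      rw [show (-(1:ℝ)/d) * d = -1 by field_simp, Real.rpow_neg_one]
    rw [hsd, ← ENNReal.ofReal_toReal hfin, ← hc₀, ← ENNReal.ofReal_mul (by positivity),
      inv_mul_cancel₀ hc₀pos.ne', ENNReal.ofReal_one]


lemma asym_lower (α β t : ℝ) (hα : 0 < α) (hβ : 0 < β) :
    min α β * |t| ≤ α * max t 0 + β * max (-t) 0 := by
  rcases le_total 0 t with h | h
  · rw [max_eq_left h, max_eq_right (by linarith), abs_of_nonneg h]
    have : min α β ≤ α := min_le_left _ _
    nlinarith
  · rw [max_eq_right h, max_eq_left (by linarith), abs_of_nonpos h]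
    have : min α β ≤ β := min_le_right _ _
    nlinarith

lemma exists_eps (d : ℕ) (hd : 0 < d) :
    ∃ ε : ℝ, 0 < ε ∧ ∀ z : EuclideanSpace ℝ (Fin d),
      volume (closedBall z (3 * Real.sqrt ε)) ≤ ENNReal.ofReal (1/2) := by
  set V := volume (ball (0 : EuclideanSpace ℝ (Fin d)) 1) with hV
  have hVfin : V ≠ ⊤ := measure_ball_lt_top.ne
  set v := V.toReal with hv
  have hv0 : 0 ≤ v := ENNReal.toReal_nonneg
  set σ : ℝ := min 1 ((2*(v+1))⁻¹) with hσ
  have hσ0 : 0 < σ := lt_min one_pos (by positivity)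
  have hσ1 : σ ≤ 1 := min_le_left _ _
  have hσ2 : σ ≤ (2*(v+1))⁻¹ := min_le_right _ _
  refine ⟨(σ/3)^2, by positivity, ?_⟩
  intro z
  have h3 : 3 * Real.sqrt ((σ/3)^2) = σ := by
    rw [Real.sqrt_sq (by positivity)]; ring
  rw [h3, Measure.addHaar_closedBall volume z hσ0.le, finrank_euclideanSpace_fin, ← hV]
  have h4 : σ^d ≤ σ := pow_le_of_le_one hσ0.le hσ1 hd.ne'
  calc ENNReal.ofReal (σ^d) * V ≤ ENNReal.ofReal σ * ENNReal.ofReal v := by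
        rw [ENNReal.ofReal_toReal hVfin]
        exact mul_le_mul_left (ENNReal.ofReal_le_ofReal h4) V
    _ = ENNReal.ofReal (σ * v) := (ENNReal.ofReal_mul hσ0.le).symm
    _ ≤ ENNReal.ofReal (1/2) := by
        apply ENNReal.ofReal_le_ofReal
        have h5 : σ * v ≤ (2*(v+1))⁻¹ * v := mul_le_mul_of_nonneg_right hσ2 hv0
        have h6 : (2*(v+1))⁻¹ * v ≤ 1/2 := by
          rw [div_eq_mul_inv, inv_mul_le_iff₀ (by positivity)]
          nlinarith
        linarith

lemma complete_square (d : ℕ) (a x : EuclideanSpace ℝ (Fin d)) (c : ℝ) :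
    (∑ j, x j ^ 2) - ((inner ℝ a x : ℝ) + c)
      = ‖x - (2:ℝ)⁻¹ • a‖^2 - (c + ‖(2:ℝ)⁻¹ • a‖^2) := by
  have h1 : ‖x‖^2 = ∑ j, x j ^ 2 := by
    rw [EuclideanSpace.norm_eq, Real.sq_sqrt (by positivity)]
    simp [Real.norm_eq_abs, sq_abs]
  have h2 : ‖x - (2:ℝ)⁻¹ • a‖^2
      = ‖x‖^2 - 2 * (inner ℝ x ((2:ℝ)⁻¹ • a) : ℝ) + ‖(2:ℝ)⁻¹ • a‖^2 :=
    norm_sub_sq_real x ((2:ℝ)⁻¹ • a)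
  have h3 : (inner ℝ x ((2:ℝ)⁻¹ • a) : ℝ) = 2⁻¹ * (inner ℝ a x : ℝ) := by
    rw [real_inner_smul_right, real_inner_comm]
  rw [h2, h3, h1]; ring


/-- The infimum over unit-volume `d`-simplices of the asymmetric `L_p`-error of best
affine approximation of `Q` is strictly positive. -/
theorem optimal_error_positive
    (d : ℕ) (hd : 0 < d) (p α β : ℝ) (hp : 1 ≤ p) (hα : 0 < α) (hβ : 0 < β) :
    0 < sInf {r : ℝ | ∃ w : Fin (d + 1) → EuclideanSpace ℝ (Fin d),
      AffineIndependent ℝ w ∧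
      volume (convexHull ℝ (Set.range w)) = 1 ∧
      r = Epab d p α β (convexHull ℝ (Set.range w))} := by
  classical
  obtain ⟨ε, hε, hball⟩ := exists_eps d hd
  have hp0 : (0:ℝ) < p := lt_of_lt_of_le one_pos hp
  set m := min α β with hm
  have hm0 : 0 < m := lt_min hα hβ
  set K : ℝ := ((2:ℝ)⁻¹)^d / 4 with hK
  have hK0 : 0 < K := by positivity
  set CC : ℝ := (K * (m*ε) ^ p) ^ (1/p) with hCC
  have hbase : 0 < K * (m*ε)^p := by
    have := Real.rpow_pos_of_pos (mul_pos hm0 hε) p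
    positivity
  have hCC0 : 0 < CC := Real.rpow_pos_of_pos hbase _
  -- the key lower bound
  have key : ∀ r ∈ {r : ℝ | ∃ w : Fin (d + 1) → EuclideanSpace ℝ (Fin d),
      AffineIndependent ℝ w ∧
      volume (convexHull ℝ (Set.range w)) = 1 ∧
      r = Epab d p α β (convexHull ℝ (Set.range w))}, CC ≤ r := by
    rintro r ⟨w, hw, hvol, rfl⟩
    set T := convexHull ℝ (Set.range w) with hT
    have hTconv : Convex ℝ T := convex_convexHull ℝ _
    have hTcpt : IsCompact T := (Set.finite_range w).isCompact_convexHull ℝ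
    have hTm : MeasurableSet T := hTcpt.isClosed.measurableSet
    have hTfin : volume T ≠ ⊤ := by rw [hvol]; exact ENNReal.one_ne_top
    rw [Epab]
    refine le_ciInf fun a => le_ciInf fun c => ?_
    set x₀ : EuclideanSpace ℝ (Fin d) := (2:ℝ)⁻¹ • a with hx₀
    set rr : ℝ := c + ‖x₀‖^2 with hrr
    set A : Set (EuclideanSpace ℝ (Fin d)) := {x | |‖x - x₀‖^2 - rr| ≤ ε} with hA
    have hAm : MeasurableSet A := by
      have hcont : Continuous fun x : EuclideanSpace ℝ (Fin d) => |‖x - x₀‖^2 - rr| :=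
        (((continuous_id.sub continuous_const).norm.pow 2).sub continuous_const).abs
      exact (IsClosed.preimage hcont isClosed_Iic).measurableSet
    have hKvol : K ≤ (volume (T \ A)).toReal :=
      vol_diff_annulus d T hTconv hTm hvol x₀ rr ε hε hball
    -- the integrand
    set g : EuclideanSpace ℝ (Fin d) → ℝ := fun x =>
      α * max ((∑ j, x j ^ 2) - ((inner ℝ a x : ℝ) + c)) 0 +
        β * max (-((∑ j, x j ^ 2) - ((inner ℝ a x : ℝ) + c))) 0 with hg
    have hsq : ∀ x : EuclideanSpace ℝ (Fin d),
        (∑ j, x j ^ 2) - ((inner ℝ a x : ℝ) + c) = ‖x - x₀‖^2 - rr :=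
      fun x => complete_square d a x c
    have hg0 : ∀ x, 0 ≤ g x := by
      intro x
      have h1 : (0:ℝ) ≤ max ((∑ j, x j ^ 2) - ((inner ℝ a x : ℝ) + c)) 0 := le_max_right _ _
      have h2 : (0:ℝ) ≤ max (-((∑ j, x j ^ 2) - ((inner ℝ a x : ℝ) + c))) 0 := le_max_right _ _
      have := mul_nonneg hα.le h1
      have := mul_nonneg hβ.le h2
      rw [hg]; dsimp only; linarith
    have hgcont : Continuous g := by
      rw [hg]
      have hf : Continuous fun x : EuclideanSpace ℝ (Fin d) =>
          (∑ j, x j ^ 2) - ((inner ℝ a x : ℝ) + c) := by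
        have : (fun x : EuclideanSpace ℝ (Fin d) =>
            (∑ j, x j ^ 2) - ((inner ℝ a x : ℝ) + c))
            = fun x : EuclideanSpace ℝ (Fin d) => ‖x - x₀‖^2 - rr := funext hsq
        rw [this]
        exact ((continuous_id.sub continuous_const).norm.pow 2).sub continuous_const
      exact ((continuous_const.mul (hf.max continuous_const)).add
        (continuous_const.mul (hf.neg.max continuous_const)))
    have hGcont : Continuous fun x => g x ^ p := by
      have hrp : Continuous fun y : ℝ => y ^ p :=
        continuous_iff_continuousAt.mpr fun y => Real.continuousAt_rpow_const y p (Or.inr hp0.le)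
      exact hrp.comp hgcont
    have hGint : IntegrableOn (fun x => g x ^ p) T := by
      exact hGcont.continuousOn.integrableOn_compact hTcpt
    -- pointwise bound on T \ A
    have hpt : ∀ x ∈ T \ A, (m*ε)^p ≤ g x ^ p := by
      intro x hx
      have hxA : ¬ (|‖x - x₀‖^2 - rr| ≤ ε) := hx.2
      have h1 : ε ≤ |‖x - x₀‖^2 - rr| := (not_le.mp hxA).le
      have h2 : m * |(∑ j, x j ^ 2) - ((inner ℝ a x : ℝ) + c)| ≤ g x := by
        rw [hg]; exact asym_lower α β _ hα hβ
      rw [hsq x] at h2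
      have h3 : m * ε ≤ g x := le_trans (mul_le_mul_of_nonneg_left h1 hm0.le) h2
      exact Real.rpow_le_rpow (by positivity) h3 hp0.le
    -- integral chain
    have hfinTA : volume (T \ A) < ⊤ :=
      lt_of_le_of_lt (measure_mono diff_subset) (lt_top_iff_ne_top.mpr hTfin)
    have I0 : ∫ _x in T \ A, (m*ε)^p ∂volume = (volume (T \ A)).toReal * (m*ε)^p := by
      rw [setIntegral_const, smul_eq_mul, measureReal_def]
    have I1 : ∫ _x in T \ A, (m*ε)^p ∂volume ≤ ∫ x in T \ A, g x ^ p ∂volume := by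
      refine setIntegral_mono_on (integrableOn_const hfinTA.ne)
        (hGint.mono_set diff_subset) (hTm.diff hAm) hpt
    have I2 : ∫ x in T \ A, g x ^ p ∂volume ≤ ∫ x in T, g x ^ p ∂volume := by
      refine setIntegral_mono_set hGint ?_ (HasSubset.Subset.eventuallyLE diff_subset)
      exact Filter.Eventually.of_forall fun x => Real.rpow_nonneg (hg0 x) p
    have I3 : K * (m*ε)^p ≤ ∫ x in T, g x ^ p ∂volume := by
      have h4 : K * (m*ε)^p ≤ (volume (T \ A)).toReal * (m*ε)^p :=
        mul_le_mul_of_nonneg_right hKvol (Real.rpow_nonneg (by positivity) p)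
      rw [I0] at I1
      linarith
    calc CC ≤ (∫ x in T, g x ^ p ∂volume) ^ (1/p) := by
          rw [hCC]
          exact Real.rpow_le_rpow hbase.le I3 (by positivity)
      _ = _ := by rw [hg]
  -- nonemptiness
  obtain ⟨w₁, hw₁, hv₁⟩ := exists_unit_simplex d hd
  have hne : {r : ℝ | ∃ w : Fin (d + 1) → EuclideanSpace ℝ (Fin d),
      AffineIndependent ℝ w ∧
      volume (convexHull ℝ (Set.range w)) = 1 ∧
      r = Epab d p α β (convexHull ℝ (Set.range w))}.Nonempty :=
    ⟨_, w₁, hw₁, hv₁, rfl⟩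
  exact lt_of_lt_of_le hCC0 (le_csInf hne key)
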